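/- arXiv:1510.09221 — 2 statements merged into one kernel-verified Lean document; each statement's English description precedes it below -/
import Mathlib

section
/- The deterministic system on ℝ⁴ given by ẋ₁ = -νx₁ + α(x₁x₃ - x₂x₄), ẋ₂ = -νx₂ + α(x₂x₃ + x₁x₄), ẋ₃ = -νx₃ + β(x₁x₃ - x₂x₄), ẋ₄ = -νx₄ + β(x₂x₃ + x₁x₄) has exactly two fixed points: the origin (0,0,0,0) and the point (ν/β, 0, ν/α, 0). -/
/-- The deterministic system on ℝ⁴ has exactly two fixed points:
the origin and (ν/β, 0, ν/α, 0). -/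
theorem fixed_points_of_system (ν α β : ℝ) (hν : 0 < ν) (hα : α ≠ 0) (hβ : β ≠ 0) :
    ∀ x1 x2 x3 x4 : ℝ,
      (-ν * x1 + α * (x1 * x3 - x2 * x4) = 0 ∧
       -ν * x2 + α * (x2 * x3 + x1 * x4) = 0 ∧
       -ν * x3 + β * (x1 * x3 - x2 * x4) = 0 ∧
       -ν * x4 + β * (x2 * x3 + x1 * x4) = 0)
      ↔ (((x1, x2, x3, x4) : ℝ × ℝ × ℝ × ℝ) = (0, 0, 0, 0) ∨
         ((x1, x2, x3, x4) : ℝ × ℝ × ℝ × ℝ) = (ν / β, 0, ν / α, 0)) := by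
  intro x1 x2 x3 x4
  constructor
  · rintro ⟨h1, h2, h3, h4⟩
    have hν' : ν ≠ 0 := ne_of_gt hν
    have e13 : β * x1 = α * x3 := by
      have h : ν * (α * x3 - β * x1) = 0 := by linear_combination β * h1 - α * h3
      have := (mul_eq_zero.mp h).resolve_left hν'
      linarith
    have e24 : β * x2 = α * x4 := by
      have h : ν * (α * x4 - β * x2) = 0 := by linear_combination β * h2 - α * h4
      have := (mul_eq_zero.mp h).resolve_left hν'
      linarith
    -- reduced equations
    have k1 : ν * x1 = β * (x1 ^ 2 - x2 ^ 2) := by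
      have h : α * (ν * x1 - β * (x1 ^ 2 - x2 ^ 2)) = 0 := by
        linear_combination -α * h1 - α * x1 * e13 + α * x2 * e24
      have := (mul_eq_zero.mp h).resolve_left hα
      linarith
    have k2 : ν * x2 = 2 * β * x1 * x2 := by
      have h : α * (ν * x2 - 2 * β * x1 * x2) = 0 := by
        linear_combination -α * h2 - α * x2 * e13 - α * x1 * e24
      have := (mul_eq_zero.mp h).resolve_left hα
      linarith
    by_cases hx2 : x2 = 0
    · subst hx2
      have hx4 : x4 = 0 := by
        have : α * x4 = 0 := by linarith [e24]
        exact (mul_eq_zero.mp this).resolve_left hα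
      have h : x1 * (ν - β * x1) = 0 := by linear_combination k1
      rcases mul_eq_zero.mp h with h | h
      · subst h
        have hx3 : x3 = 0 := by
          have : α * x3 = 0 := by linarith [e13]
          exact (mul_eq_zero.mp this).resolve_left hα
        left; simp [hx3, hx4]
      · right
        have hx1 : x1 = ν / β := by field_simp; linarith
        have hx3 : x3 = ν / α := by
          field_simp
          rw [hx1] at e13
          field_simp at e13
          linarith
        simp [hx1, hx3, hx4]
    · exfalso
      have hx1 : ν = 2 * β * x1 := by
        have h : x2 * (ν - 2 * β * x1) = 0 := by linear_combination k2
        have := (mul_eq_zero.mp h).resolve_left hx2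
        linarith
      have hsq : 0 < x2 ^ 2 := by positivity
      have hz : β * (x1 ^ 2 + x2 ^ 2) = 0 := by linear_combination k1 - x1 * hx1
      have := (mul_eq_zero.mp hz).resolve_left hβ
      nlinarith [sq_nonneg x1]
  · rintro (h | h) <;>
      (injection h with h1 h; injection h with h2 h; injection h with h3 h4;
       subst h1; subst h2; subst h3; subst h4) <;>
      refine ⟨?_, ?_, ?_, ?_⟩ <;> field_simp <;> ring
end

section
/- Under the linear change of coordinates y₁ = (x₁ + (α/β)x₃)/2, y₂ = (x₁ - (α/β)x₃)/2, y₃ = (x₂ + (α/β)x₄)/2, y₄ = (x₂ - (α/β)x₄)/2, the system ẋ₁ = -νx₁ + α(x₁x₃ - x₂x₄), ẋ₂ = -νx₂ + α(x₂x₃ + x₁x₄), ẋ₃ = -νx₃ + β(x₁x₃ - x₂x₄), ẋ₄ = -νx₄ + β(x₂x₃ + x₁x₄) transforms into ẏ₁ = -νy₁ + β[(y₁² - y₂²) - (y₃² - y₄²)], ẏ₂ = -νy₂, ẏ₃ = -νy₃ + 2β(y₁y₃ - y₂y₄), ẏ₄ = -νy₄. -/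
/-- Under the linear change of coordinates, the x-system transforms into the y-system. -/
theorem coordinate_change_transforms_system (ν α β : ℝ) (hα : α ≠ 0) (hβ : β ≠ 0)
    (x1 x2 x3 x4 : ℝ → ℝ)
    (h1 : ∀ t, HasDerivAt x1 (-ν * x1 t + α * (x1 t * x3 t - x2 t * x4 t)) t)
    (h2 : ∀ t, HasDerivAt x2 (-ν * x2 t + α * (x2 t * x3 t + x1 t * x4 t)) t)
    (h3 : ∀ t, HasDerivAt x3 (-ν * x3 t + β * (x1 t * x3 t - x2 t * x4 t)) t)
    (h4 : ∀ t, HasDerivAt x4 (-ν * x4 t + β * (x2 t * x3 t + x1 t * x4 t)) t)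
    (y1 y2 y3 y4 : ℝ → ℝ)
    (hy1 : y1 = fun t => (x1 t + (α / β) * x3 t) / 2)
    (hy2 : y2 = fun t => (x1 t - (α / β) * x3 t) / 2)
    (hy3 : y3 = fun t => (x2 t + (α / β) * x4 t) / 2)
    (hy4 : y4 = fun t => (x2 t - (α / β) * x4 t) / 2) :
    (∀ t, HasDerivAt y1
      (-ν * y1 t + β * ((y1 t ^ 2 - y2 t ^ 2) - (y3 t ^ 2 - y4 t ^ 2))) t) ∧
    (∀ t, HasDerivAt y2 (-ν * y2 t) t) ∧
    (∀ t, HasDerivAt y3 (-ν * y3 t + 2 * β * (y1 t * y3 t - y2 t * y4 t)) t) ∧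
    (∀ t, HasDerivAt y4 (-ν * y4 t) t) := by
  subst hy1 hy2 hy3 hy4
  refine ⟨fun t => ?_, fun t => ?_, fun t => ?_, fun t => ?_⟩
  · have h := ((h1 t).add ((h3 t).const_mul (α / β))).div_const 2
    have e : (-ν * x1 t + α * (x1 t * x3 t - x2 t * x4 t) +
        α / β * (-ν * x3 t + β * (x1 t * x3 t - x2 t * x4 t))) / 2 =
        -ν * ((x1 t + α / β * x3 t) / 2) +
        β * ((((x1 t + α / β * x3 t) / 2) ^ 2 - ((x1 t - α / β * x3 t) / 2) ^ 2) -
          (((x2 t + α / β * x4 t) / 2) ^ 2 - ((x2 t - α / β * x4 t) / 2) ^ 2)) := by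
      field_simp
      ring
    exact e ▸ h
  · have h := ((h1 t).sub ((h3 t).const_mul (α / β))).div_const 2
    have e : (-ν * x1 t + α * (x1 t * x3 t - x2 t * x4 t) -
        α / β * (-ν * x3 t + β * (x1 t * x3 t - x2 t * x4 t))) / 2 =
        -ν * ((x1 t - α / β * x3 t) / 2) := by
      field_simp
      ring
    exact e ▸ h
  · have h := ((h2 t).add ((h4 t).const_mul (α / β))).div_const 2
    have e : (-ν * x2 t + α * (x2 t * x3 t + x1 t * x4 t) +
        α / β * (-ν * x4 t + β * (x2 t * x3 t + x1 t * x4 t))) / 2 =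
        -ν * ((x2 t + α / β * x4 t) / 2) +
        2 * β * (((x1 t + α / β * x3 t) / 2) * ((x2 t + α / β * x4 t) / 2) -
          ((x1 t - α / β * x3 t) / 2) * ((x2 t - α / β * x4 t) / 2)) := by
      field_simp
      ring
    exact e ▸ h
  · have h := ((h2 t).sub ((h4 t).const_mul (α / β))).div_const 2
    have e : (-ν * x2 t + α * (x2 t * x3 t + x1 t * x4 t) -
        α / β * (-ν * x4 t + β * (x2 t * x3 t + x1 t * x4 t))) / 2 =
        -ν * ((x2 t - α / β * x4 t) / 2) := by
      field_simp
      ring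
    exact e ▸ h
end
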